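/- For every nonnegative integer n and every real number x, 𝔠_{n+1}(x) = x · ∑_{k=0}^{⌊n/2⌋} 4^{−k} · binom(n+1, 2k+1) · 𝔠_{n−2k}(x). -/

import Mathlib

open Nat Finset

/-- Central factorial numbers of the second kind. -/
noncomputable def centralT (n k : ℕ) : ℝ :=
  (1 / (k ! : ℝ)) * ∑ j ∈ Finset.range (k + 1),
    (-1 : ℝ) ^ j * (k.choose j : ℝ) * ((k : ℝ) / 2 - (j : ℝ)) ^ n

/-- Central Fubini-like polynomials. -/
noncomputable def centralFubini (n : ℕ) (x : ℝ) : ℝ :=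
  ∑ k ∈ Finset.range (n + 1), (k ! : ℝ) * centralT n k * x ^ k

lemma altsum_choose (m : ℕ) (hm : 0 < m) :
    ∑ j ∈ Finset.range (m + 1), (-1 : ℝ) ^ j * (m.choose j : ℝ) = 0 := by
  have h := Int.alternating_sum_range_choose (n := m)
  rw [if_neg hm.ne'] at h
  have : ((∑ i ∈ Finset.range (m + 1), (-1 : ℤ) ^ i * (m.choose i : ℤ) : ℤ) : ℝ) = 0 := by
    rw [h]; norm_num
  push_cast at this
  exact this

lemma altsum_pow (i : ℕ) : ∀ m : ℕ, i < m →
    ∑ j ∈ Finset.range (m + 1), (-1 : ℝ) ^ j * (m.choose j : ℝ) * (j : ℝ) ^ i = 0 := by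
  induction i using Nat.strong_induction_on with
  | _ i ih =>
    intro m him
    match i with
    | 0 => simpa using altsum_choose m (by omega)
    | i + 1 =>
      obtain ⟨m', rfl⟩ : ∃ m', m = m' + 1 := ⟨m - 1, by omega⟩
      rw [Finset.sum_range_succ' _ (m' + 1)]
      have key : ∀ j ∈ Finset.range (m' + 1),
          (-1 : ℝ) ^ (j + 1) * ((m' + 1).choose (j + 1) : ℝ) * ((j : ℝ) + 1) ^ (i + 1)
            = -((m' : ℝ) + 1) * ((-1 : ℝ) ^ j * (m'.choose j : ℝ) * ((j : ℝ) + 1) ^ i) := by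
        intro j _
        have hc : ((m' + 1).choose (j + 1) : ℝ) * ((j : ℝ) + 1) = ((m' : ℝ) + 1) * (m'.choose j : ℝ) := by
          have h2 : ((m' + 1) * m'.choose j : ℕ) = ((m' + 1).choose (j + 1) * (j + 1) : ℕ) :=
            Nat.add_one_mul_choose_eq m' j
          exact_mod_cast (congrArg (fun n : ℕ => (n : ℝ)) h2).symm
        calc (-1 : ℝ) ^ (j + 1) * ((m' + 1).choose (j + 1) : ℝ) * ((j : ℝ) + 1) ^ (i + 1)
            = (-1 : ℝ) ^ (j + 1) * (((m' + 1).choose (j + 1) : ℝ) * ((j : ℝ) + 1)) * ((j : ℝ) + 1) ^ i := by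
              rw [pow_succ]; ring
          _ = _ := by rw [hc]; rw [pow_succ]; ring
      have hsum : ∑ j ∈ Finset.range (m' + 1),
          (-1 : ℝ) ^ (j + 1) * ((m' + 1).choose (j + 1) : ℝ) * ((j : ℝ) + 1) ^ (i + 1)
          = -((m' : ℝ) + 1) * ∑ j ∈ Finset.range (m' + 1),
              (-1 : ℝ) ^ j * (m'.choose j : ℝ) * ((j : ℝ) + 1) ^ i := by
        rw [Finset.mul_sum]; exact Finset.sum_congr rfl key
      have expand : ∀ j ∈ Finset.range (m' + 1),
          (-1 : ℝ) ^ j * (m'.choose j : ℝ) * ((j : ℝ) + 1) ^ i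
          = ∑ t ∈ Finset.range (i + 1),
              ((i.choose t : ℝ)) * ((-1 : ℝ) ^ j * (m'.choose j : ℝ) * (j : ℝ) ^ t) := by
        intro j _
        rw [add_pow (j : ℝ) 1 i, Finset.mul_sum]
        exact Finset.sum_congr rfl fun t _ => by ring
      have inner0 : ∑ j ∈ Finset.range (m' + 1),
          (-1 : ℝ) ^ j * (m'.choose j : ℝ) * ((j : ℝ) + 1) ^ i = 0 := by
        rw [Finset.sum_congr rfl expand, Finset.sum_comm]
        apply Finset.sum_eq_zero
        intro t ht
        have ht' : t ≤ i := by simpa [Nat.lt_succ_iff] using ht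
        rw [← Finset.mul_sum, ih t (by omega) m' (by omega), mul_zero]
      push_cast
      rw [hsum, inner0]
      simp

noncomputable def Sf (N m : ℕ) : ℝ :=
  ∑ j ∈ Finset.range (m + 1), (-1 : ℝ) ^ j * (m.choose j : ℝ) * ((m : ℝ) / 2 - (j : ℝ)) ^ N


lemma Sf_eq_zero {N m : ℕ} (h : N < m) : Sf N m = 0 := by
  unfold Sf
  have expand : ∀ j ∈ Finset.range (m + 1),
      (-1 : ℝ) ^ j * (m.choose j : ℝ) * ((m : ℝ) / 2 - (j : ℝ)) ^ N
      = ∑ t ∈ Finset.range (N + 1),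
          ((m : ℝ) / 2) ^ t * (-1 : ℝ) ^ (N - t) * (N.choose t : ℝ)
            * ((-1 : ℝ) ^ j * (m.choose j : ℝ) * (j : ℝ) ^ (N - t)) := by
    intro j _
    have : ((m : ℝ) / 2 - (j : ℝ)) = ((m : ℝ) / 2 + (-(j : ℝ))) := by ring
    rw [this, add_pow ((m : ℝ) / 2) (-(j : ℝ)) N, Finset.mul_sum]
    refine Finset.sum_congr rfl fun t _ => ?_
    rw [neg_pow]
    ring
  rw [Finset.sum_congr rfl expand, Finset.sum_comm]
  apply Finset.sum_eq_zero
  intro t ht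
  rw [← Finset.mul_sum, altsum_pow (N - t) m (by omega), mul_zero]

lemma lemC (a : ℝ) (n : ℕ) :
    (a + 1/2) ^ (n + 1) - (a - 1/2) ^ (n + 1)
      = ∑ k ∈ Finset.range (n / 2 + 1),
          ((4 : ℝ) ^ k)⁻¹ * (((n + 1).choose (2 * k + 1)) : ℝ) * a ^ (n - 2 * k) := by
  have h1 : (a + 1/2) ^ (n + 1)
      = ∑ i ∈ Finset.range (n + 2), a ^ i * (1/2 : ℝ) ^ (n + 1 - i) * ((n+1).choose i : ℝ) :=
    add_pow a (1/2) (n+1)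
  have h2 : (a - 1/2) ^ (n + 1)
      = ∑ i ∈ Finset.range (n + 2), a ^ i * (-(1/2) : ℝ) ^ (n + 1 - i) * ((n+1).choose i : ℝ) := by
    have : a - 1/2 = a + (-(1/2)) := by ring
    rw [this]; exact add_pow a (-(1/2)) (n+1)
  rw [h1, h2, ← Finset.sum_sub_distrib]
  have hterm : ∀ i, a ^ i * (1/2 : ℝ) ^ (n + 1 - i) * ((n+1).choose i : ℝ)
      - a ^ i * (-(1/2) : ℝ) ^ (n + 1 - i) * ((n+1).choose i : ℝ)
      = a ^ i * ((1/2 : ℝ) ^ (n + 1 - i) - (-(1/2) : ℝ) ^ (n + 1 - i)) * ((n+1).choose i : ℝ) := by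
    intro i; ring
  simp only [hterm]
  set g : ℕ → ℝ := fun i =>
    a ^ i * ((1/2 : ℝ) ^ (n + 1 - i) - (-(1/2) : ℝ) ^ (n + 1 - i)) * ((n+1).choose i : ℝ) with hg
  have himg : (Finset.range (n / 2 + 1)).image (fun k => n - 2 * k) ⊆ Finset.range (n + 2) := by
    intro i hi
    simp only [Finset.mem_image, Finset.mem_range] at hi ⊢
    obtain ⟨k, hk, rfl⟩ := hi
    omega
  have hzero : ∀ i ∈ Finset.range (n + 2),
      i ∉ (Finset.range (n / 2 + 1)).image (fun k => n - 2 * k) → g i = 0 := by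
    intro i hi hni
    simp only [Finset.mem_range] at hi
    simp only [Finset.mem_image, Finset.mem_range, not_exists] at hni
    have heven : ¬ Odd (n + 1 - i) := by
      intro ⟨k, hk⟩
      exact hni k ⟨by omega, by omega⟩
    rw [Nat.not_odd_iff_even] at heven
    have hpow : (-(1/2) : ℝ) ^ (n + 1 - i) = (1/2 : ℝ) ^ (n + 1 - i) := heven.neg_pow _
    simp only [hg]
    rw [hpow, sub_self, mul_zero, zero_mul]
  rw [← Finset.sum_subset himg hzero, Finset.sum_image ?hinj]
  case hinj =>
    intro k hk l hl h
    simp only [Finset.mem_coe, Finset.mem_range] at hk hl h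
    omega
  refine Finset.sum_congr rfl fun k hk => ?_
  simp only [Finset.mem_range] at hk
  have h1 : n + 1 - (n - 2 * k) = 2 * k + 1 := by omega
  have h2 : ((n+1).choose (n - 2*k)) = ((n+1).choose (2*k+1)) := by
    have := Nat.choose_symm (n := n + 1) (k := 2*k+1) (by omega)
    rw [← this]
    congr 1
    omega
  simp only [hg, h1, h2]
  have h3 : (1/2 : ℝ) ^ (2*k+1) - (-(1/2) : ℝ) ^ (2*k+1) = ((4:ℝ)^k)⁻¹ := by
    rw [Odd.neg_pow ⟨k, by ring⟩, sub_neg_eq_add, ← two_mul, pow_succ, pow_mul, ← inv_pow]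
    norm_num
    ring
  rw [h3]
  ring



lemma lemB (N m : ℕ) :
    Sf N (m + 1) = ∑ j ∈ Finset.range (m + 1), (-1 : ℝ) ^ j * (m.choose j : ℝ) *
      ((((m : ℝ) + 1) / 2 - (j : ℝ)) ^ N - (((m : ℝ) + 1) / 2 - ((j : ℝ) + 1)) ^ N) := by
  set b : ℕ → ℝ := fun j => ((m : ℝ) + 1) / 2 - (j : ℝ) with hb
  set h : ℕ → ℝ := fun j => (-1 : ℝ) ^ j * (m.choose j : ℝ) * b j ^ N with hh
  have e1 : Sf N (m + 1) = ∑ j ∈ Finset.range (m + 2),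
      (-1 : ℝ) ^ j * ((m+1).choose j : ℝ) * b j ^ N := by
    unfold Sf
    refine Finset.sum_congr rfl fun j _ => ?_
    simp only [hb]
    push_cast
    ring_nf
  rw [e1, Finset.sum_range_succ' _ (m + 1)]
  have e2 : ∀ j ∈ Finset.range (m + 1),
      (-1 : ℝ) ^ (j+1) * ((m+1).choose (j+1) : ℝ) * b (j+1) ^ N
      = (-1 : ℝ) ^ (j+1) * (m.choose j : ℝ) * b (j+1) ^ N + h (j+1) := by
    intro j _
    have : ((m+1).choose (j+1) : ℝ) = (m.choose j : ℝ) + (m.choose (j+1) : ℝ) := by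
      rw [Nat.choose_succ_succ]; push_cast; ring
    rw [this]; simp only [hh]; ring
  rw [Finset.sum_congr rfl e2, Finset.sum_add_distrib]
  have e3 : (∑ j ∈ Finset.range (m + 1), h (j+1)) +
      (-1:ℝ)^(0:ℕ) * ((m+1).choose 0 : ℝ) * b 0 ^ N
      = ∑ j ∈ Finset.range (m + 1), h j := by
    have : (-1:ℝ)^(0:ℕ) * ((m+1).choose 0 : ℝ) * b 0 ^ N = h 0 := by
      simp [hh]
    rw [this, ← Finset.sum_range_succ' h (m+1), Finset.sum_range_succ]
    have : h (m+1) = 0 := by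
      simp [hh, Nat.choose_succ_self]
    rw [this, add_zero]
  rw [add_assoc, e3]
  rw [← Finset.sum_add_distrib]
  refine Finset.sum_congr rfl fun j _ => ?_
  simp only [hh, hb]
  push_cast
  ring

lemma key (n m : ℕ) : Sf (n+1) (m+1)
    = ∑ k ∈ Finset.range (n/2+1),
        ((4:ℝ)^k)⁻¹ * (((n+1).choose (2*k+1)) : ℝ) * Sf (n - 2*k) m := by
  rw [lemB]
  have e : ∀ j ∈ Finset.range (m+1),
      (-1:ℝ)^j * (m.choose j : ℝ) *
        ((((m:ℝ)+1)/2 - (j:ℝ))^(n+1) - (((m:ℝ)+1)/2 - ((j:ℝ)+1))^(n+1))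
      = ∑ k ∈ Finset.range (n/2+1), ((4:ℝ)^k)⁻¹ * (((n+1).choose (2*k+1)) : ℝ) *
          ((-1:ℝ)^j * (m.choose j : ℝ) * ((m:ℝ)/2 - (j:ℝ))^(n-2*k)) := by
    intro j _
    have ha1 : ((m:ℝ)+1)/2 - (j:ℝ) = ((m:ℝ)/2 - (j:ℝ)) + 1/2 := by ring
    have ha2 : ((m:ℝ)+1)/2 - ((j:ℝ)+1) = ((m:ℝ)/2 - (j:ℝ)) - 1/2 := by ring
    rw [ha1, ha2, lemC, Finset.mul_sum]
    exact Finset.sum_congr rfl fun k _ => by ring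
  rw [Finset.sum_congr rfl e, Finset.sum_comm]
  refine Finset.sum_congr rfl fun k _ => ?_
  rw [← Finset.mul_sum]
  rfl

lemma cf_eq (n : ℕ) (x : ℝ) :
    centralFubini n x = ∑ m ∈ Finset.range (n+1), Sf n m * x ^ m := by
  unfold centralFubini centralT Sf
  refine Finset.sum_congr rfl fun m _ => ?_
  have hm : (m ! : ℝ) ≠ 0 := Nat.cast_ne_zero.mpr m.factorial_ne_zero
  rw [one_div, ← mul_assoc, mul_inv_cancel₀ hm, one_mul]

theorem central_fubini_odd_convolution (n : ℕ) (x : ℝ) :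
    centralFubini (n + 1) x =
      x * ∑ k ∈ Finset.range (n / 2 + 1),
        ((4 : ℝ) ^ k)⁻¹ * ((n + 1).choose (2 * k + 1) : ℝ) * centralFubini (n - 2 * k) x := by
  have lhs : centralFubini (n+1) x
      = ∑ m ∈ Finset.range (n+1), Sf (n+1) (m+1) * x ^ (m+1) := by
    rw [cf_eq, Finset.sum_range_succ' _ (n+1)]
    have h0 : Sf (n+1) 0 = 0 := by
      simp [Sf]
    rw [h0]
    simp
  rw [lhs]
  have rhs : ∀ k ∈ Finset.range (n/2+1),
      ((4 : ℝ) ^ k)⁻¹ * ((n + 1).choose (2 * k + 1) : ℝ) * centralFubini (n - 2 * k) x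
      = ∑ m ∈ Finset.range (n+1),
          ((4 : ℝ) ^ k)⁻¹ * ((n + 1).choose (2 * k + 1) : ℝ) * (Sf (n - 2*k) m * x ^ m) := by
    intro k hk
    simp only [Finset.mem_range] at hk
    rw [cf_eq]
    rw [Finset.sum_subset (Finset.range_subset_range.mpr (by omega : n - 2*k + 1 ≤ n + 1))
      (fun m hm hnm => ?_), Finset.mul_sum]
    have : n - 2*k < m := by
      simp only [Finset.mem_range] at hm hnm; omega
    rw [Sf_eq_zero this, zero_mul]
  rw [Finset.sum_congr rfl rhs, Finset.mul_sum]
  simp only [Finset.mul_sum]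
  rw [Finset.sum_comm]
  refine Finset.sum_congr rfl fun m _ => ?_
  rw [key, Finset.sum_mul]
  exact Finset.sum_congr rfl fun k _ => by rw [pow_succ]; ring
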